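/- arXiv:1605.01877 — 6 statements merged into one kernel-verified Lean document; each statement's English description precedes it below -/
import Mathlib

section
/- The Siegel domain coordinates compute the norm of the representative vector: for all τ ∈ ℂ and σ ∈ W, one has ⟨z(τ,σ), z(τ,σ)⟩ = 2·Im(τ)·|δ|·|⟨ℓ',ℓ⟩|² + ⟨σ,σ⟩. Consequently ⟨z(τ,σ), z(τ,σ)⟩ > 0 if and only if 2·Im(τ)·|δ|·|⟨ℓ',ℓ⟩|² > −⟨σ,σ⟩, i.e. if and only if (τ,σ) lies in the generalized upper half-plane H_{ℓ,ℓ'}. -/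
open Complex

/-- The representative vector `z(τ,σ) = ℓ' − δτ⟨ℓ',ℓ⟩ℓ + σ` of the Siegel domain
coordinates `(τ,σ)`. -/
noncomputable def zcoord {V : Type*} [AddCommGroup V] [Module ℂ V]
    (B : V →ₗ[ℂ] V →ₛₗ[starRingEnd ℂ] ℂ) (δ : ℂ) (ℓ ℓ' : V) (τ : ℂ) (σ : V) : V :=
  ℓ' - (δ * τ * B ℓ' ℓ) • ℓ + σ

/-- The Siegel domain coordinates compute the norm of the representative vector:
`⟨z(τ,σ),z(τ,σ)⟩ = 2·Im τ·|δ|·|⟨ℓ',ℓ⟩|² + ⟨σ,σ⟩`, and consequently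
`⟨z(τ,σ),z(τ,σ)⟩ > 0` iff `2·Im τ·|δ|·|⟨ℓ',ℓ⟩|² > −⟨σ,σ⟩`, i.e. iff `(τ,σ)`
lies in the generalized upper half-plane. -/
theorem siegel_norm {V : Type*} [AddCommGroup V] [Module ℂ V]
    [FiniteDimensional ℂ V]
    (B : V →ₗ[ℂ] V →ₛₗ[starRingEnd ℂ] ℂ)
    (hherm : ∀ v w : V, B w v = starRingEnd ℂ (B v w))
    (δ : ℂ) (hδre : δ.re = 0) (hδim : 0 < δ.im)
    (ℓ ℓ' : V) (hℓ : B ℓ ℓ = 0) (hℓ' : B ℓ' ℓ' = 0) (hne : B ℓ ℓ' ≠ 0)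
    (τ : ℂ) (σ : V) (hσℓ : B σ ℓ = 0) (hσℓ' : B σ ℓ' = 0) :
    B (zcoord B δ ℓ ℓ' τ σ) (zcoord B δ ℓ ℓ' τ σ)
        = ((2 * τ.im * δ.im * ‖B ℓ' ℓ‖ ^ 2 : ℝ) : ℂ) + B σ σ
      ∧ (0 < (B (zcoord B δ ℓ ℓ' τ σ) (zcoord B δ ℓ ℓ' τ σ)).re ↔
          2 * τ.im * δ.im * ‖B ℓ' ℓ‖ ^ 2 > -((B σ σ).re)) := by
  have hℓσ : B ℓ σ = 0 := by rw [hherm, hσℓ, map_zero]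
  have hℓ'σ : B ℓ' σ = 0 := by rw [hherm, hσℓ', map_zero]
  have hℓℓ' : B ℓ ℓ' = starRingEnd ℂ (B ℓ' ℓ) := hherm _ _
  have key : B (zcoord B δ ℓ ℓ' τ σ) (zcoord B δ ℓ ℓ' τ σ)
      = ((2 * τ.im * δ.im * ‖B ℓ' ℓ‖ ^ 2 : ℝ) : ℂ) + B σ σ := by
    simp only [zcoord, map_add, map_sub, map_smul, map_smulₛₗ, LinearMap.add_apply,
      LinearMap.sub_apply, LinearMap.smul_apply, hℓ, hℓ', hσℓ, hσℓ', hℓσ, hℓ'σ, hℓℓ',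
      smul_eq_mul, mul_zero, sub_zero, zero_sub, add_zero, zero_add, map_mul]
    have h1 : starRingEnd ℂ (B ℓ' ℓ) * B ℓ' ℓ = (‖B ℓ' ℓ‖^2 : ℝ) := by
      rw [mul_comm, Complex.mul_conj]
      norm_cast
      rw [Complex.sq_norm]
    have hδ : starRingEnd ℂ δ = -δ := by
      apply Complex.ext <;> simp [hδre]
    have hτ : δ * τ + starRingEnd ℂ (δ * τ) = ((-2 * τ.im * δ.im : ℝ) : ℂ) := by
      apply Complex.ext <;> simp [hδre] <;> ring
    have : -(starRingEnd ℂ δ * starRingEnd ℂ τ * starRingEnd ℂ (B ℓ' ℓ) * B ℓ' ℓ)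
        - δ * τ * (starRingEnd ℂ (B ℓ' ℓ) * B ℓ' ℓ)
        = ((2 * τ.im * δ.im * ‖B ℓ' ℓ‖ ^ 2 : ℝ) : ℂ) := by
      have : -(starRingEnd ℂ δ * starRingEnd ℂ τ * starRingEnd ℂ (B ℓ' ℓ) * B ℓ' ℓ)
          - δ * τ * (starRingEnd ℂ (B ℓ' ℓ) * B ℓ' ℓ)
          = -(δ * τ + starRingEnd ℂ (δ * τ)) * (starRingEnd ℂ (B ℓ' ℓ) * B ℓ' ℓ) := by
        rw [map_mul]; ring
      rw [this, hτ, h1]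
      push_cast
      ring
    linear_combination this
  refine ⟨key, ?_⟩
  rw [key]
  constructor
  · intro h
    simp only [Complex.add_re, Complex.ofReal_re] at h
    linarith
  · intro h
    simp only [Complex.add_re, Complex.ofReal_re]
    linarith
end

section
/- The Siegel domain is an affine model of the positive cone: assume in addition that the restriction of ⟨·,·⟩ to W is negative definite. Then every v ∈ V with ⟨v,v⟩ > 0 satisfies ⟨v,ℓ⟩ ≠ 0, and there exist unique c ∈ ℂ \ {0}, τ ∈ ℂ and σ ∈ W with v = c·z(τ,σ); moreover necessarily 2·Im(τ)·|δ|·|⟨ℓ',ℓ⟩|² > −⟨σ,σ⟩. -/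
open Complex

/-- The Siegel domain is an affine model of the positive cone: if the restriction
of the form to `W = ℓ^⊥ ∩ ℓ'^⊥` is negative definite, then every `v` with
`⟨v,v⟩ > 0` satisfies `⟨v,ℓ⟩ ≠ 0`, there exist unique `c ≠ 0`, `τ ∈ ℂ`, `σ ∈ W`
with `v = c·z(τ,σ)`, and necessarily `2·Im τ·|δ|·|⟨ℓ',ℓ⟩|² > −⟨σ,σ⟩`. -/
theorem siegel_affine_model {V : Type*} [AddCommGroup V] [Module ℂ V]
    [FiniteDimensional ℂ V]
    (B : V →ₗ[ℂ] V →ₛₗ[starRingEnd ℂ] ℂ)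
    (hherm : ∀ v w : V, B w v = starRingEnd ℂ (B v w))
    (δ : ℂ) (hδre : δ.re = 0) (hδim : 0 < δ.im)
    (ℓ ℓ' : V) (hℓ : B ℓ ℓ = 0) (hℓ' : B ℓ' ℓ' = 0) (hne : B ℓ ℓ' ≠ 0)
    (hnegW : ∀ w : V, B w ℓ = 0 → B w ℓ' = 0 → w ≠ 0 → (B w w).re < 0)
    (v : V) (hv : 0 < (B v v).re) :
    B v ℓ ≠ 0
      ∧ (∃! p : ℂ × ℂ × V, p.1 ≠ 0 ∧ B p.2.2 ℓ = 0 ∧ B p.2.2 ℓ' = 0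
          ∧ v = p.1 • zcoord B δ ℓ ℓ' p.2.1 p.2.2)
      ∧ (∀ (c τ : ℂ) (σ : V), c ≠ 0 → B σ ℓ = 0 → B σ ℓ' = 0 →
          v = c • zcoord B δ ℓ ℓ' τ σ →
          2 * τ.im * δ.im * ‖B ℓ' ℓ‖ ^ 2 > -((B σ σ).re)) := by
  have hK' : B ℓ ℓ' = starRingEnd ℂ (B ℓ' ℓ) := hherm ℓ' ℓ
  have hKne : B ℓ' ℓ ≠ 0 := by
    intro h; apply hne; rw [hK', h, map_zero]
  have hδne : δ ≠ 0 := by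
    intro h; rw [h] at hδim; simp at hδim
  -- Part 1
  have hvl : B v ℓ ≠ 0 := by
    intro h
    set t := B v ℓ' / B ℓ ℓ' with ht
    have hℓv : B ℓ v = 0 := by rw [hherm, h, map_zero]
    have hwℓ : B (v - t • ℓ) ℓ = 0 := by
      simp [map_sub, LinearMap.sub_apply, LinearMap.smul_apply, hℓ, h, smul_eq_mul]
    have hwℓ' : B (v - t • ℓ) ℓ' = 0 := by
      simp only [map_sub, LinearMap.sub_apply, map_smul, LinearMap.smul_apply, smul_eq_mul, ht]
      field_simp
      ring
    have hBww : B (v - t • ℓ) (v - t • ℓ) = B v v := by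
      simp only [map_sub, LinearMap.sub_apply, map_smul, LinearMap.smul_apply,
        map_smulₛₗ, smul_eq_mul, hℓ, hℓv, h]
      ring
    have hwne : v - t • ℓ ≠ 0 := by
      intro h0
      rw [h0] at hBww
      simp at hBww
      rw [← hBww] at hv
      simp at hv
    have := hnegW _ hwℓ hwℓ' hwne
    rw [hBww] at this
    linarith
  refine ⟨hvl, ?_, ?_⟩
  · -- existence and uniqueness
    set K := B ℓ' ℓ with hKdef
    set c₀ : ℂ := B v ℓ / K with hc₀
    have hc₀ne : c₀ ≠ 0 := div_ne_zero hvl hKne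
    set τ₀ : ℂ := -(B v ℓ') / (c₀ * δ * K * starRingEnd ℂ K) with hτ₀
    set σ₀ : V := c₀⁻¹ • v - ℓ' + (δ * τ₀ * K) • ℓ with hσ₀
    have hzv : zcoord B δ ℓ ℓ' τ₀ σ₀ = c₀⁻¹ • v := by
      rw [zcoord, hσ₀]; abel
    have hveq₀ : v = c₀ • zcoord B δ ℓ ℓ' τ₀ σ₀ := by
      rw [hzv, smul_smul, mul_inv_cancel₀ hc₀ne, one_smul]
    have hσ₀ℓ : B σ₀ ℓ = 0 := by
      simp only [hσ₀, map_sub, map_add, LinearMap.sub_apply, LinearMap.add_apply,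
        map_smul, LinearMap.smul_apply, smul_eq_mul, hℓ, ← hKdef]
      rw [hc₀]
      field_simp
      ring
    have hσ₀ℓ' : B σ₀ ℓ' = 0 := by
      simp only [hσ₀, map_sub, map_add, LinearMap.sub_apply, LinearMap.add_apply,
        map_smul, LinearMap.smul_apply, smul_eq_mul, hℓ', hK', ← hKdef]
      have hKc : starRingEnd ℂ K ≠ 0 := by simpa using hKne
      rw [hτ₀]
      field_simp
      ring
    -- uniqueness claim
    have uniq : ∀ c τ : ℂ, ∀ σ : V, c ≠ 0 → B σ ℓ = 0 → B σ ℓ' = 0 →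
        v = c • zcoord B δ ℓ ℓ' τ σ → c = c₀ ∧ τ = τ₀ ∧ σ = σ₀ := by
      intro c τ σ hc hσℓ hσℓ' hveq
      have hBvℓ : B v ℓ = c * K := by
        rw [hveq]
        simp only [zcoord, map_smul, map_sub, map_add, LinearMap.smul_apply,
          LinearMap.sub_apply, LinearMap.add_apply, smul_eq_mul, hℓ, hσℓ, ← hKdef]
        ring
      have hceq : c = c₀ := by
        rw [hc₀, hBvℓ, mul_div_assoc, div_self hKne, mul_one]
      have hBvℓ' : B v ℓ' = -(c * δ * τ * K * starRingEnd ℂ K) := by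
        rw [hveq]
        simp only [zcoord, map_smul, map_sub, map_add, LinearMap.smul_apply,
          LinearMap.sub_apply, LinearMap.add_apply, smul_eq_mul, hℓ', hσℓ', hK', ← hKdef]
        ring
      have hτeq : τ = τ₀ := by
        rw [hτ₀, hBvℓ', ← hceq]
        have hKc : starRingEnd ℂ K ≠ 0 := by simpa using hKne
        field_simp
      refine ⟨hceq, hτeq, ?_⟩
      rw [hσ₀, ← hceq, ← hτeq, hveq, smul_smul, inv_mul_cancel₀ hc, one_smul, zcoord, ← hKdef]
      abel
    refine ⟨(c₀, τ₀, σ₀), ⟨hc₀ne, hσ₀ℓ, hσ₀ℓ', hveq₀⟩, ?_⟩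
    rintro ⟨c, τ, σ⟩ ⟨hc, hσℓ, hσℓ', hveq⟩
    obtain ⟨h1, h2, h3⟩ := uniq c τ σ hc hσℓ hσℓ' hveq
    simp [h1, h2, h3]
  · -- inequality
    intro c τ σ hc hσℓ hσℓ' hveq
    set K := B ℓ' ℓ with hKdef
    have hℓσ : B ℓ σ = 0 := by rw [hherm, hσℓ, map_zero]
    have hℓ'σ : B ℓ' σ = 0 := by rw [hherm, hσℓ', map_zero]
    have hvv : B v v = c * starRingEnd ℂ c *
        (B σ σ - starRingEnd ℂ (δ * τ * K) * K - (δ * τ * K) * starRingEnd ℂ K) := by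
      rw [hveq]
      simp only [zcoord, map_smul, map_sub, map_add, LinearMap.smul_apply,
        LinearMap.sub_apply, LinearMap.add_apply, map_smulₛₗ, smul_eq_mul,
        hℓ, hℓ', hσℓ, hσℓ', hℓσ, hℓ'σ, hK', ← hKdef, map_mul]
      ring
    have hre : (B v v).re = Complex.normSq c *
        ((B σ σ).re + 2 * τ.im * δ.im * Complex.normSq K) := by
      rw [hvv, Complex.mul_conj]
      rw [Complex.re_ofReal_mul]
      simp only [Complex.sub_re, Complex.mul_re, Complex.mul_im, Complex.conj_re,
        Complex.conj_im, Complex.normSq_apply, hδre]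
      ring
    rw [hre] at hv
    have hcpos : 0 < Complex.normSq c := Complex.normSq_pos.mpr hc
    have hX : 0 < (B σ σ).re + 2 * τ.im * δ.im * Complex.normSq K := by
      rcases mul_pos_iff.mp hv with ⟨_, h⟩ | ⟨h, _⟩
      · exact h
      · linarith
    have habs : ‖K‖ ^ 2 = Complex.normSq K := Complex.sq_norm K
    rw [habs]
    linarith
end

section
/- The local Borcherds product converges absolutely: for every w ∈ ℂ, the family indexed by q ∈ ℤ whose q-th member is the finite product ∏_{p=0}^{m−1} (1 − e(σ(q)(w + (p + qζ)/m))) is multipliable in ℂ; hence Ψ(w) is a well-defined complex number. -/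
open Complex

/-- `e(x) = exp(2πix)`. -/
noncomputable def ee (x : ℂ) : ℂ := Complex.exp (2 * Real.pi * Complex.I * x)

/-- The sign `σ(q)`: `1` for `q ≥ 0` and `−1` for `q < 0`. -/
def sgn (q : ℤ) : ℂ := if 0 ≤ q then 1 else -1

/-- The `q`-th member of the local Borcherds product:
`∏_{p=0}^{m−1} (1 − e(σ(q)(w + (p + qζ)/m)))`. -/
noncomputable def psiTerm (m : ℕ) (ζ : ℂ) (w : ℂ) (q : ℤ) : ℂ :=
  ∏ p ∈ Finset.range m, (1 - ee (sgn q * (w + ((p : ℂ) + (q : ℂ) * ζ) / (m : ℂ))))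

/-- The local Borcherds product `Ψ(w)`. -/
noncomputable def Psi (m : ℕ) (ζ : ℂ) (w : ℂ) : ℂ := ∏' q : ℤ, psiTerm m ζ w q

lemma norm_prod_one_add_sub_one_le (s : Finset ℕ) (f : ℕ → ℂ) :
    ‖∏ i ∈ s, (1 + f i) - 1‖ ≤ ∏ i ∈ s, (1 + ‖f i‖) - 1 := by
  classical
  induction s using Finset.induction with
  | empty => simp
  | @insert a s ha ih =>
    rw [Finset.prod_insert ha, Finset.prod_insert ha]
    have hP : ‖∏ i ∈ s, (1 + f i)‖ ≤ ∏ i ∈ s, (1 + ‖f i‖) := by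
      refine (Finset.norm_prod_le s (fun i => 1 + f i)).trans ?_
      exact Finset.prod_le_prod (fun i _ => norm_nonneg _)
        (fun i _ => (norm_add_le _ _).trans (by simp))
    have key : (1 + f a) * ∏ i ∈ s, (1 + f i) - 1
        = (∏ i ∈ s, (1 + f i) - 1) + f a * ∏ i ∈ s, (1 + f i) := by ring
    rw [key]
    have := norm_add_le (∏ i ∈ s, (1 + f i) - 1) (f a * ∏ i ∈ s, (1 + f i))
    refine this.trans ?_
    rw [norm_mul]
    have h2 : ‖f a‖ * ‖∏ i ∈ s, (1 + f i)‖ ≤ ‖f a‖ * ∏ i ∈ s, (1 + ‖f i‖) :=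
      mul_le_mul_of_nonneg_left hP (norm_nonneg _)
    nlinarith [Finset.prod_nonneg (s := s) (f := fun i => 1 + ‖f i‖)
      (fun i _ => by positivity)]

lemma one_add_pow_sub_one_le (m : ℕ) {x : ℝ} (hx : 0 ≤ x) (hx1 : x ≤ 1) :
    (1 + x) ^ m - 1 ≤ (2 ^ m - 1) * x := by
  induction m with
  | zero => simp
  | succ n ih =>
    have h2 : (1:ℝ) ≤ 2 ^ n := one_le_pow₀ (by norm_num)
    rw [pow_succ, pow_succ]
    have h3 : (1 + x) ^ n ≤ 2 ^ n := pow_le_pow_left₀ (by linarith) (by linarith) n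
    nlinarith [mul_le_mul_of_nonneg_right h3 hx, pow_nonneg (by linarith : (0:ℝ) ≤ 1 + x) n]

lemma norm_ee (x : ℂ) : ‖ee x‖ = Real.exp (-(2 * Real.pi * x.im)) := by
  rw [ee, Complex.norm_exp]
  congr 1
  simp [Complex.mul_re]

lemma im_aux (m : ℕ) (hm : (m:ℝ) ≠ 0) (ζ w : ℂ) (q : ℤ) (p : ℕ) :
    (w + ((p:ℂ) + (q:ℂ) * ζ) / (m:ℂ)).im = w.im + (q * ζ.im) / m := by
  simp [Complex.add_im, Complex.div_im, Complex.mul_im, Complex.normSq_apply]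
  field_simp

lemma factor_norm_le (m : ℕ) (hm : 1 ≤ m) (ζ : ℂ) (w : ℂ) (q : ℤ) (p : ℕ) :
    ‖ee (sgn q * (w + ((p:ℂ) + (q:ℂ) * ζ) / (m:ℂ)))‖ ≤
      Real.exp (2 * Real.pi * |w.im|) * Real.exp (-(2 * Real.pi * ζ.im / m)) ^ q.natAbs := by
  have hm0 : (m:ℝ) ≠ 0 := by positivity
  rw [norm_ee]
  have him := im_aux m hm0 ζ w q p
  by_cases hq : 0 ≤ q
  · have hs : sgn q = 1 := if_pos hq
    rw [hs, one_mul, him]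
    have hqn : (q:ℝ) = (q.natAbs : ℝ) := by
      rw [Nat.cast_natAbs, Int.cast_abs]
      exact (_root_.abs_of_nonneg (show (0:ℝ) ≤ (q:ℝ) from by exact_mod_cast hq)).symm
    have key : -(2*Real.pi*(w.im + (q:ℝ)*ζ.im/m)) =
        (-(2*Real.pi*w.im)) + (q.natAbs : ℝ) * (-(2*Real.pi*ζ.im/m)) := by
      rw [← hqn]; ring
    rw [key, Real.exp_add, Real.exp_nat_mul]
    gcongr
    nlinarith [abs_nonneg w.im, neg_abs_le w.im, Real.pi_pos]
  · have hs : sgn q = -1 := if_neg hq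
    rw [hs, neg_one_mul, Complex.neg_im, him]
    have hqn : -(q:ℝ) = (q.natAbs : ℝ) := by
      rw [Nat.cast_natAbs, Int.cast_abs]
      exact (_root_.abs_of_neg (show (q:ℝ) < 0 from by exact_mod_cast not_le.mp hq)).symm
    have key : -(2*Real.pi*(-(w.im + (q:ℝ)*ζ.im/m))) =
        (2*Real.pi*w.im) + (q.natAbs : ℝ) * (-(2*Real.pi*ζ.im/m)) := by
      rw [← hqn]; ring
    rw [key, Real.exp_add, Real.exp_nat_mul]
    gcongr
    nlinarith [abs_nonneg w.im, le_abs_self w.im, Real.pi_pos]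

lemma psiTerm_sub_one_norm_le (m : ℕ) (hm : 1 ≤ m) (ζ : ℂ) (w : ℂ) (q : ℤ) :
    ‖psiTerm m ζ w q - 1‖ ≤
      (1 + Real.exp (2 * Real.pi * |w.im|) *
        Real.exp (-(2 * Real.pi * ζ.im / m)) ^ q.natAbs) ^ m - 1 := by
  set u := Real.exp (2 * Real.pi * |w.im|) * Real.exp (-(2 * Real.pi * ζ.im / m)) ^ q.natAbs
    with hu
  have h1 : psiTerm m ζ w q =
      ∏ p ∈ Finset.range m, (1 + (-(ee (sgn q * (w + ((p : ℂ) + (q : ℂ) * ζ) / (m : ℂ)))))) := by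
    unfold psiTerm; exact Finset.prod_congr rfl (fun p _ => by ring)
  rw [h1]
  refine (norm_prod_one_add_sub_one_le _ _).trans ?_
  have h2 : ∏ p ∈ Finset.range m,
      (1 + ‖-(ee (sgn q * (w + ((p : ℂ) + (q : ℂ) * ζ) / (m : ℂ))))‖) ≤ (1 + u) ^ m := by
    calc ∏ p ∈ Finset.range m,
        (1 + ‖-(ee (sgn q * (w + ((p : ℂ) + (q : ℂ) * ζ) / (m : ℂ))))‖)
        ≤ ∏ _p ∈ Finset.range m, (1 + u) := by
          refine Finset.prod_le_prod (fun i _ => by positivity) (fun p _ => ?_)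
          rw [norm_neg]
          have := factor_norm_le m hm ζ w q p
          rw [hu]; linarith
      _ = (1 + u) ^ m := by rw [Finset.prod_const, Finset.card_range]
  linarith

/-- The local Borcherds product converges absolutely: the family
`q ↦ ∏_{p=0}^{m−1} (1 − e(σ(q)(w + (p + qζ)/m)))` is multipliable, hence `Ψ(w)`
is a well-defined complex number. -/
theorem localBorcherds_multipliable (m : ℕ) (hm : 1 ≤ m) (ζ : ℂ) (hζ : 0 < ζ.im)
    (w : ℂ) :
    Multipliable (fun q : ℤ => psiTerm m ζ w q) := by
  by_cases hz : ∀ q : ℤ, psiTerm m ζ w q ≠ 0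
  swap
  · push_neg at hz
    obtain ⟨q0, hq0⟩ := hz
    refine ⟨0, ?_⟩
    have hev : ∀ᶠ s : Finset ℤ in Filter.atTop, ∏ i ∈ s, psiTerm m ζ w i = 0 := by
      filter_upwards [Filter.eventually_ge_atTop ({q0} : Finset ℤ)] with s hs
      exact Finset.prod_eq_zero (hs (Finset.mem_singleton_self q0)) hq0
    exact Filter.Tendsto.congr'
      (by filter_upwards [hev] with s hs; exact hs.symm) tendsto_const_nhds
  -- all terms nonzero
  set C := Real.exp (2 * Real.pi * |w.im|) with hC
  set r := Real.exp (-(2 * Real.pi * ζ.im / m)) with hr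
  have hC0 : 0 < C := Real.exp_pos _
  have hr0 : 0 < r := Real.exp_pos _
  have hr1 : r < 1 := by
    rw [hr]
    apply Real.exp_lt_one_iff.mpr
    have hm0 : (0:ℝ) < (m:ℝ) := by exact_mod_cast hm
    have : 0 < 2 * Real.pi * ζ.im / m := by positivity
    linarith
  have hsum : Summable (fun q : ℤ => C * r ^ q.natAbs) := by
    apply Summable.mul_left
    apply Summable.of_nat_of_neg_add_one
    · simpa using summable_geometric_of_lt_one hr0.le hr1
    · have : Summable (fun n : ℕ => r * r ^ n) :=
        (summable_geometric_of_lt_one hr0.le hr1).mul_left r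
      refine this.congr (fun n => ?_)
      have hn : (-((n:ℤ) + 1)).natAbs = n + 1 := by omega
      rw [hn, pow_succ, mul_comm]
  have htend : Filter.Tendsto (fun q : ℤ => C * r ^ q.natAbs) Filter.cofinite (nhds 0) :=
    hsum.tendsto_cofinite_zero
  set B : ℝ := (2:ℝ) ^ m - 1 with hB
  have hB0 : 0 < B := by
    rw [hB]
    have : (2:ℝ) ^ 1 ≤ 2 ^ m := pow_le_pow_right₀ (by norm_num) hm
    simp at this; linarith
  have hδ : (0:ℝ) < min 1 ((1/2) / B) := lt_min one_pos (by positivity)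
  have hev : ∀ᶠ q : ℤ in Filter.cofinite, C * r ^ q.natAbs ≤ min 1 ((1/2) / B) := by
    have := htend.eventually (ge_mem_nhds hδ)
    filter_upwards [this] with q hq using hq
  have hlog : Summable (fun q : ℤ => Complex.log (psiTerm m ζ w q)) := by
    apply Summable.of_norm_bounded_eventually (g := fun q : ℤ => (3/2) * (B * (C * r ^ q.natAbs)))
    · exact (hsum.mul_left B).mul_left (3/2)
    · filter_upwards [hev] with q hq
      have hu0 : 0 ≤ C * r ^ q.natAbs := by positivity
      have h1 : ‖psiTerm m ζ w q - 1‖ ≤ (1 + C * r ^ q.natAbs) ^ m - 1 :=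
        psiTerm_sub_one_norm_le m hm ζ w q
      have h2 : (1 + C * r ^ q.natAbs) ^ m - 1 ≤ B * (C * r ^ q.natAbs) :=
        one_add_pow_sub_one_le m hu0 (hq.trans (min_le_left _ _))
      have h3 : ‖psiTerm m ζ w q - 1‖ ≤ 1/2 := by
        have : B * (C * r ^ q.natAbs) ≤ 1/2 := by
          have := hq.trans (min_le_right _ _)
          rw [le_div_iff₀ hB0] at this
          linarith [mul_comm B (C * r ^ q.natAbs)]
        exact h1.trans (h2.trans this)
      have h4 : ‖Complex.log (1 + (psiTerm m ζ w q - 1))‖ ≤ (3/2) * ‖psiTerm m ζ w q - 1‖ :=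
        Complex.norm_log_one_add_half_le_self h3
      rw [add_sub_cancel] at h4
      calc ‖Complex.log (psiTerm m ζ w q)‖ ≤ (3/2) * ‖psiTerm m ζ w q - 1‖ := h4
        _ ≤ (3/2) * (B * (C * r ^ q.natAbs)) := by nlinarith
  exact Complex.multipliable_of_summable_log hlog
end

section
/- The imaginary part of a hermitian form is an explicit coboundary (Proposition 2.1, hermitian case): define u : W × W → ℂ by u(t,σ) := (2i)⁻¹·(2H(σ,t)/c + H(t,t)). Then for all t, t', σ ∈ W: u(t', σ + c·t) − u(t + t', σ) + u(t, σ) = Im H(t,t'). -/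
open Complex

/-- The imaginary part of a hermitian form is an explicit coboundary: with
`u(t,σ) = (2i)⁻¹(2H(σ,t)/c + H(t,t))` one has
`u(t', σ + c·t) − u(t+t', σ) + u(t, σ) = Im H(t,t')`. -/
theorem hermitian_coboundary {W : Type*} [AddCommGroup W] [Module ℂ W]
    (H : W →ₗ[ℂ] W →ₛₗ[starRingEnd ℂ] ℂ)
    (hherm : ∀ x y : W, H y x = starRingEnd ℂ (H x y))
    (c : ℂ) (hc : c ≠ 0)
    (u : W → W → ℂ)
    (hu : ∀ t σ : W, u t σ = (2 * Complex.I)⁻¹ * (2 * H σ t / c + H t t))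
    (t t' σ : W) :
    u t' (σ + c • t) - u (t + t') σ + u t σ = ((H t t').im : ℂ) := by
  simp only [hu, map_add, map_smul, LinearMap.add_apply, LinearMap.smul_apply, smul_eq_mul]
  rw [hherm t t']
  have h2 : ((H t t').im : ℂ) = (2 * Complex.I)⁻¹ * (H t t' - starRingEnd ℂ (H t t')) := by
    rw [Complex.sub_conj]
    push_cast
    field_simp
  rw [h2]
  field_simp
  ring
end

section
/- The imaginary part of a symmetric complex bilinear form is an explicit coboundary (Proposition 2.1, bilinear case): define u : W × W → ℂ by u(t,σ) := (2i)⁻¹·(G(σ,t)/c + conj(G(t,t))/2). Then for all t, t', σ ∈ W: u(t', σ + c·t) − u(t + t', σ) + u(t, σ) = Im G(t,t'). -/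
open Complex

/-- The imaginary part of a symmetric complex bilinear form is an explicit
coboundary: with `u(t,σ) = (2i)⁻¹(G(σ,t)/c + conj(G(t,t))/2)` one has
`u(t', σ + c·t) − u(t+t', σ) + u(t, σ) = Im G(t,t')`. -/
theorem bilinear_coboundary {W : Type*} [AddCommGroup W] [Module ℂ W]
    (G : W →ₗ[ℂ] W →ₗ[ℂ] ℂ)
    (hsymm : ∀ x y : W, G x y = G y x)
    (c : ℂ) (hc : c ≠ 0)
    (u : W → W → ℂ)
    (hu : ∀ t σ : W, u t σ
      = (2 * Complex.I)⁻¹ * (G σ t / c + starRingEnd ℂ (G t t) / 2))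
    (t t' σ : W) :
    u t' (σ + c • t) - u (t + t') σ + u t σ = ((G t t').im : ℂ) := by
  simp only [hu, map_add, map_smul, LinearMap.add_apply, LinearMap.smul_apply, smul_eq_mul,
    hsymm t' t]
  have hz : G t t' - starRingEnd ℂ (G t t') = 2 * (G t t').im * Complex.I := by
    push_cast [Complex.sub_conj]; ring
  have hI : Complex.I ≠ 0 := Complex.I_ne_zero
  field_simp
  linear_combination 2*c * hz
end

section
/- Torsion criterion in the cohomology of the Heisenberg group (Lemma 2.2): assume ω is antisymmetric (ω(t,t') = −ω(t',t)) and let B : Λ × Λ → ℤ be bi-additive and antisymmetric. Then the 2-cocycle c_B on Γ = ℤ ×_ω Λ is a 2-coboundary if and only if B = k·ω for some k ∈ ℤ. Consequently, there exists an integer m ≥ 1 such that m·c_B is a 2-coboundary if and only if B and ω are linearly dependent over ℤ. -/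
/-- Multiplication of the Heisenberg group `Γ = ℤ ×_ω Λ`:
`(a,t)·(a',t') = (a + a' + ω(t,t'), t + t')`. -/
def heisMul {Λ : Type*} [AddCommGroup Λ] (ω : Λ → Λ → ℤ) (g g' : ℤ × Λ) : ℤ × Λ :=
  (g.1 + g'.1 + ω g.2 g'.2, g.2 + g'.2)

/-- Auxiliary: if the 2-cocycle associated to a bi-additive antisymmetric `B`
is a coboundary, then `B = k·ω`. -/
lemma heis_forward {Λ : Type*} [AddCommGroup Λ]
    (ω : Λ → Λ → ℤ)
    (hω_addr : ∀ s t t' : Λ, ω s (t + t') = ω s t + ω s t')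
    (hω_anti : ∀ t t' : Λ, ω t t' = -ω t' t)
    (B : Λ → Λ → ℤ)
    (hB_addr : ∀ s t t' : Λ, B s (t + t') = B s t + B s t')
    (hB_anti : ∀ t t' : Λ, B t t' = -B t' t)
    (u : ℤ × Λ → ℤ)
    (hu : ∀ g g' : ℤ × Λ, B g.2 g'.2 = u g + u g' - u (heisMul ω g g')) :
    ∃ k : ℤ, ∀ t t' : Λ, B t t' = k * ω t t' := by
  have hω0r : ∀ t : Λ, ω t 0 = 0 := by
    intro t; have h := hω_addr t 0 0; rw [add_zero] at h; linarith
  have hB0 : ∀ t : Λ, B t 0 = 0 := by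
    intro t; have h := hB_addr t 0 0; rw [add_zero] at h; linarith
  have hf : ∀ a a' : ℤ, u (a + a', (0:Λ)) = u (a, 0) + u (a', 0) := by
    intro a a'
    have h := hu (a, 0) (a', 0)
    simp [heisMul, hω0r 0, hB0 0] at h
    linarith
  have hlin : ∀ a : ℤ, u (a, (0:Λ)) = a * u (1, 0) := by
    intro a
    have := map_zsmul (AddMonoidHom.mk' (fun a : ℤ => u (a, (0:Λ)))
      (fun a a' => hf a a')) a 1
    simpa [smul_eq_mul] using this
  have hdec : ∀ (a : ℤ) (t : Λ), u (a, t) = u (0, t) + a * u (1, 0) := by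
    intro a t
    have h := hu (0, t) (a, 0)
    simp [heisMul, hω0r t, hB0 t] at h
    rw [← hlin]; linarith
  refine ⟨-u (1, 0), fun t t' => ?_⟩
  have h1 := hu (0, t) (0, t')
  have h2 := hu (0, t') (0, t)
  simp only [heisMul] at h1 h2
  rw [hdec (0 + 0 + ω t t') (t + t')] at h1
  rw [hdec (0 + 0 + ω t' t) (t' + t), add_comm t' t] at h2
  have ha := hB_anti t' t
  have hwa := hω_anti t' t
  rw [ha, hwa] at h2
  ring_nf at h1 h2 ⊢
  linarith

/-- Torsion criterion in the cohomology of the Heisenberg group: for `ω`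
bi-additive antisymmetric and `B` bi-additive antisymmetric, the 2-cocycle
`c_B((a,t),(a',t')) = B(t,t')` on `Γ = ℤ ×_ω Λ` is a 2-coboundary iff `B = k·ω`
for some `k ∈ ℤ`; and some positive multiple `m·c_B` is a 2-coboundary iff
`B` and `ω` are linearly dependent over `ℤ`. -/
theorem heisenberg_torsion_criterion {Λ : Type*} [AddCommGroup Λ]
    (ω : Λ → Λ → ℤ)
    (hω_addl : ∀ s t t' : Λ, ω (t + t') s = ω t s + ω t' s)
    (hω_addr : ∀ s t t' : Λ, ω s (t + t') = ω s t + ω s t')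
    (hω_anti : ∀ t t' : Λ, ω t t' = -ω t' t)
    (B : Λ → Λ → ℤ)
    (hB_addl : ∀ s t t' : Λ, B (t + t') s = B t s + B t' s)
    (hB_addr : ∀ s t t' : Λ, B s (t + t') = B s t + B s t')
    (hB_anti : ∀ t t' : Λ, B t t' = -B t' t) :
    ((∃ u : ℤ × Λ → ℤ, ∀ g g' : ℤ × Λ,
          B g.2 g'.2 = u g + u g' - u (heisMul ω g g'))
        ↔ ∃ k : ℤ, ∀ t t' : Λ, B t t' = k * ω t t')
      ∧ ((∃ m : ℕ, 1 ≤ m ∧ ∃ u : ℤ × Λ → ℤ, ∀ g g' : ℤ × Λ,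
            (m : ℤ) * B g.2 g'.2 = u g + u g' - u (heisMul ω g g'))
          ↔ ∃ a b : ℤ, b ≠ 0 ∧ ∀ t t' : Λ, b * B t t' = a * ω t t') := by
  -- backward construction: if B' = k·ω then u(a,t) = -k·a works
  have bwd : ∀ (k : ℤ) (B' : Λ → Λ → ℤ), (∀ t t', B' t t' = k * ω t t') →
      ∃ u : ℤ × Λ → ℤ, ∀ g g' : ℤ × Λ,
        B' g.2 g'.2 = u g + u g' - u (heisMul ω g g') := by
    intro k B' hB'
    refine ⟨fun g => -k * g.1, fun g g' => ?_⟩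
    simp only [heisMul, hB']
    ring
  constructor
  · constructor
    · rintro ⟨u, hu⟩
      exact heis_forward ω hω_addr hω_anti B hB_addr hB_anti u hu
    · rintro ⟨k, hk⟩
      exact bwd k B hk
  · constructor
    · rintro ⟨m, hm, u, hu⟩
      obtain ⟨k, hk⟩ := heis_forward ω hω_addr hω_anti
        (fun t t' => (m : ℤ) * B t t')
        (fun s t t' => by rw [hB_addr]; ring)
        (fun t t' => by rw [hB_anti]; ring) u hu
      exact ⟨k, m, by exact_mod_cast Nat.one_le_iff_ne_zero.mp hm, hk⟩
    · rintro ⟨a, b, hb, hab⟩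
      refine ⟨b.natAbs, Nat.one_le_iff_ne_zero.mpr (by simpa using hb), ?_⟩
      rcases Int.natAbs_eq b with h | h
      · refine bwd a (fun t t' => (b.natAbs : ℤ) * B t t') (fun t t' => ?_)
        rw [← h]; exact hab t t'
      · refine bwd (-a) (fun t t' => (b.natAbs : ℤ) * B t t') (fun t t' => ?_)
        have : b * B t t' = a * ω t t' := hab t t'
        have hb' : (b.natAbs : ℤ) = -b := by omega
        rw [hb']; linarith [hab t t']
end
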